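/- For any m₀ ≥ 0, Φ_{m₀}(x) = Σ_{m=m₀}^∞ Φ_m(φ(x)), where Φ_m(x) = Σ_{k=0}^m (-1)^k C(m,k) φ^{∘k}(x) and the series converges coefficientwise in F[[x]]. -/

import Mathlib

open PowerSeries

/-- Composition `f ∘ g` of formal power series in one variable (intended for `g` with zero
constant term): the coefficient of `X^d` only involves `(coeff k f)` for `k ≤ d`. -/
noncomputable def PowerSeries.compose {F : Type*} [CommRing F] (f g : PowerSeries F) :
    PowerSeries F :=
  PowerSeries.mk fun d => ∑ k ∈ Finset.range (d + 1), coeff k f * coeff d (g ^ k)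

/-- `k`-fold compositional iterate `φ^{∘k}`, with `φ^{∘0} = id = X`. -/
noncomputable def PowerSeries.iterComp {F : Type*} [CommRing F] (φ : PowerSeries F) :
    ℕ → PowerSeries F
  | 0 => PowerSeries.X
  | k + 1 => PowerSeries.compose (PowerSeries.iterComp φ k) φ

/-- `Φ_m = ∑_{k=0}^m (-1)^k C(m,k) φ^{∘k}`. -/
noncomputable def PowerSeries.Phi {F : Type*} [CommRing F] (φ : PowerSeries F) (m : ℕ) :
    PowerSeries F :=
  ∑ k ∈ Finset.range (m + 1), ((-1 : F) ^ k * (m.choose k : F)) • PowerSeries.iterComp φ k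

namespace PowerSeries

variable {F : Type*} [CommRing F]

lemma coeff_compose (f g : PowerSeries F) (d : ℕ) :
    coeff d (compose f g) =
      ∑ k ∈ Finset.range (d + 1), coeff k f * coeff d (g ^ k) := by
  simp [compose, coeff_mk]

lemma compose_add (f g h : PowerSeries F) :
    compose (f + g) h = compose f h + compose g h := by
  ext d
  simp [coeff_compose, add_mul, Finset.sum_add_distrib]

lemma compose_smul (c : F) (f g : PowerSeries F) :
    compose (c • f) g = c • compose f g := by
  ext d
  simp [coeff_compose, Finset.mul_sum, mul_assoc]

lemma compose_sum {ι : Type*} (s : Finset ι) (f : ι → PowerSeries F) (g : PowerSeries F) :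
    compose (∑ i ∈ s, f i) g = ∑ i ∈ s, compose (f i) g := by
  classical
  induction s using Finset.induction_on with
  | empty =>
    ext d; simp [coeff_compose]
  | insert _ _ hx ih =>
    rw [Finset.sum_insert hx, Finset.sum_insert hx, compose_add, ih]

/-- The key telescoping identity: `Φ_m ∘ φ = Φ_m - Φ_{m+1}`. -/
lemma compose_Phi (φ : PowerSeries F) (m : ℕ) :
    compose (Phi φ m) φ = Phi φ m - Phi φ (m + 1) := by
  have h1 : compose (Phi φ m) φ =
      ∑ k ∈ Finset.range (m + 1),
        ((-1 : F) ^ k * (m.choose k : F)) • iterComp φ (k + 1) := by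
    rw [Phi, compose_sum]
    exact Finset.sum_congr rfl fun k _ => by rw [compose_smul]; rfl
  have h2 : Phi φ (m + 1) =
      (∑ j ∈ Finset.range (m + 1),
          ((-1 : F) ^ (j + 1) * ((m + 1).choose (j + 1) : F)) • iterComp φ (j + 1)) +
        ((-1 : F) ^ 0 * ((m + 1).choose 0 : F)) • iterComp φ 0 := by
    rw [Phi, Finset.sum_range_succ']
  have h3 : Phi φ m =
      (∑ j ∈ Finset.range (m + 1),
          ((-1 : F) ^ (j + 1) * (m.choose (j + 1) : F)) • iterComp φ (j + 1)) +
        ((-1 : F) ^ 0 * (m.choose 0 : F)) • iterComp φ 0 := by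
    have hext : Phi φ m = ∑ k ∈ Finset.range (m + 1 + 1),
        ((-1 : F) ^ k * (m.choose k : F)) • iterComp φ k := by
      rw [Finset.sum_range_succ, Nat.choose_succ_self, Nat.cast_zero, mul_zero, zero_smul,
        add_zero, Phi]
    rw [hext, Finset.sum_range_succ']
  have h4 : ∀ j ∈ Finset.range (m + 1),
      ((-1 : F) ^ (j + 1) * ((m + 1).choose (j + 1) : F)) • iterComp φ (j + 1) =
        ((-1 : F) ^ (j + 1) * (m.choose (j + 1) : F)) • iterComp φ (j + 1) -
          ((-1 : F) ^ j * (m.choose j : F)) • iterComp φ (j + 1) := by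
    intro j _
    have hc : ((-1 : F) ^ (j + 1) * ((m + 1).choose (j + 1) : F)) =
        ((-1 : F) ^ (j + 1) * (m.choose (j + 1) : F)) -
          ((-1 : F) ^ j * (m.choose j : F)) := by
      rw [Nat.choose_succ_succ]
      push_cast
      ring
    rw [hc, sub_smul]
  rw [h1, h3, h2, Finset.sum_congr rfl h4, Finset.sum_sub_distrib]
  simp only [Nat.choose_zero_right, Nat.cast_one, pow_zero, one_mul]
  abel

lemma constantCoeff_iterComp (φ : PowerSeries F) (k : ℕ) :
    coeff 0 (iterComp φ k) = 0 := by
  induction k with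
  | zero => simp [iterComp]
  | succ n ih =>
    rw [iterComp, coeff_compose]
    simp [ih]

lemma coeff_zero_Phi (φ : PowerSeries F) (m : ℕ) : coeff 0 (Phi φ m) = 0 := by
  rw [Phi, map_sum]
  refine Finset.sum_eq_zero fun k _ => ?_
  rw [coeff_smul, constantCoeff_iterComp, smul_zero]

lemma coeff_lt_pow_eq_zero (g : PowerSeries F) (h0 : constantCoeff g = 0)
    {n k : ℕ} (h : n < k) : coeff n (g ^ k) = 0 := by
  have hX : (X : PowerSeries F) ∣ g := X_dvd_iff.mpr h0
  have hXk : (X : PowerSeries F) ^ k ∣ g ^ k := pow_dvd_pow_of_dvd hX k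
  exact X_pow_dvd_iff.mp hXk n h

lemma coeff_pow_self (g : PowerSeries F) (h0 : constantCoeff g = 0) (n : ℕ) :
    coeff n (g ^ n) = (coeff 1 g) ^ n := by
  induction n with
  | zero => simp
  | succ n ih =>
    rw [pow_succ, coeff_mul]
    rw [Finset.sum_eq_single (n, 1)]
    · rw [ih, pow_succ]
    · rintro ⟨i, j⟩ hmem hne
      rw [Finset.HasAntidiagonal.mem_antidiagonal] at hmem
      rcases lt_trichotomy i n with hi | hi | hi
      · rw [coeff_lt_pow_eq_zero g h0 hi, zero_mul]
      · subst hi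
        have : j = 1 := by omega
        exact absurd (by rw [this]) hne
      · have hj : j = 0 := by omega
        subst hj
        simp [PowerSeries.coeff_zero_eq_constantCoeff, h0]
    · intro h
      simp [Finset.mem_antidiagonal] at h

/-- Order lemma: `coeff d (Φ_m) = 0` whenever `m ≥ d`. -/
lemma coeff_Phi_eq_zero (φ : PowerSeries F) (h0 : constantCoeff φ = 0)
    (h1 : coeff 1 φ = 1) : ∀ d m : ℕ, d ≤ m → coeff d (Phi φ m) = 0 := by
  intro d
  induction d using Nat.strong_induction_on with
  | _ d ih =>
    intro m hdm
    rcases Nat.eq_zero_or_pos d with hd | hd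
    · subst hd; exact coeff_zero_Phi φ m
    · obtain ⟨n, rfl⟩ : ∃ n, m = n + 1 := ⟨m - 1, by omega⟩
      have key : coeff d (Phi φ (n + 1)) =
          coeff d (Phi φ n) - coeff d (compose (Phi φ n) φ) := by
        rw [compose_Phi]; simp
      rw [key, coeff_compose]
      obtain ⟨e, rfl⟩ : ∃ e, d = e + 1 := ⟨d - 1, by omega⟩
      rw [Finset.sum_range_succ, coeff_pow_self φ h0, h1, one_pow, mul_one]
      have hrest : ∀ j ∈ Finset.range (e + 1),
          coeff j (Phi φ n) * coeff (e + 1) (φ ^ j) = 0 := by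
        intro j hj
        rw [Finset.mem_range] at hj
        rw [ih j (by omega) n (by omega), zero_mul]
      rw [Finset.sum_eq_zero hrest]
      ring

end PowerSeries

/-- for any `m₀ ≥ 0`, `Φ_{m₀}(x) = ∑_{m=m₀}^∞ Φ_m(φ(x))`, the series
converging coefficientwise: for each degree `d` all but finitely many terms have zero
`d`-th coefficient, and the `d`-th coefficient of `Φ_{m₀}` is the (finite) sum. -/
theorem Phi_eq_sum_comp {F : Type*} [Field F] [CharZero F] (φ : PowerSeries F)
    (h0 : constantCoeff φ = 0) (h1 : coeff 1 φ = 1) (m₀ : ℕ) :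
    (∀ d : ℕ, ∃ M : ℕ, ∀ m ≥ M,
        coeff d (PowerSeries.compose (PowerSeries.Phi φ m) φ) = 0) ∧
      (∀ d M : ℕ, (∀ m > M, coeff d (PowerSeries.compose (PowerSeries.Phi φ m) φ) = 0) →
        coeff d (PowerSeries.Phi φ m₀) =
          ∑ m ∈ Finset.Icc m₀ M, coeff d (PowerSeries.compose (PowerSeries.Phi φ m) φ)) := by
  have hz := PowerSeries.coeff_Phi_eq_zero φ h0 h1
  have hkey : ∀ d m : ℕ, coeff d (PowerSeries.compose (PowerSeries.Phi φ m) φ) =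
      coeff d (PowerSeries.Phi φ m) - coeff d (PowerSeries.Phi φ (m + 1)) := by
    intro d m
    rw [PowerSeries.compose_Phi]; simp
  constructor
  · intro d
    refine ⟨d, fun m hm => ?_⟩
    rw [hkey, hz d m hm, hz d (m + 1) (by omega), sub_zero]
  · intro d M hM
    -- coeff d (Phi φ n) = 0 for all n ≥ M + 1
    have hconst : ∀ j : ℕ, coeff d (PowerSeries.Phi φ (M + 1 + j)) =
        coeff d (PowerSeries.Phi φ (M + 1)) := by
      intro j
      induction j with
      | zero => rfl
      | succ j ihj =>
        have h5 := hM (M + 1 + j) (by omega)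
        rw [hkey] at h5
        have h6 : coeff d (PowerSeries.Phi φ (M + 1 + j)) =
            coeff d (PowerSeries.Phi φ (M + 1 + j + 1)) := sub_eq_zero.mp h5
        rw [show M + 1 + (j + 1) = M + 1 + j + 1 from rfl, ← h6, ihj]
    have hMz : ∀ n ≥ M + 1, coeff d (PowerSeries.Phi φ n) = 0 := by
      intro n hn
      obtain ⟨j, rfl⟩ : ∃ j, n = M + 1 + j := ⟨n - (M + 1), by omega⟩
      rw [hconst j, ← hconst d, hz d (M + 1 + d) (by omega)]
    rcases le_or_gt m₀ M with hle | hlt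
    · -- telescoping sum
      have : ∑ m ∈ Finset.Icc m₀ M,
          coeff d (PowerSeries.compose (PowerSeries.Phi φ m) φ) =
          coeff d (PowerSeries.Phi φ m₀) - coeff d (PowerSeries.Phi φ (M + 1)) := by
        rw [show Finset.Icc m₀ M = Finset.Ico m₀ (M + 1) from rfl,
          Finset.sum_Ico_eq_sum_range]
        have := Finset.sum_range_sub' (f := fun i => coeff d (PowerSeries.Phi φ (m₀ + i)))
          (n := M + 1 - m₀)
        rw [show m₀ + (M + 1 - m₀) = M + 1 by omega] at this
        simp only [Nat.add_zero] at this
        rw [← this]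
        exact Finset.sum_congr rfl fun i _ => by rw [hkey, Nat.add_assoc]
      rw [this, hMz (M + 1) (by omega), sub_zero]
    · rw [Finset.Icc_eq_empty (by omega), Finset.sum_empty, hMz m₀ (by omega)]
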